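/- Let d ≥ 1, let v : (0,∞) → ℝ ∪ {+∞} be measurable, β > 0, R > 0, and let k ≥ 1 be an integer. Let Λ ⊆ ℝ^d be a Borel set of finite Lebesgue measure |Λ|. Then (1/k!) ∫_{(ℝ^d)^k} exp(−βU(x₁,…,x_k)) · 1({x₁,…,x_k} is R-connected) · 1(∃ j ∈ {1,…,k} : x_j ∈ Λ) dx₁⋯dx_k ≤ k·|Λ|·Z_k^cl(β). -/

import Mathlib

open MeasureTheory
open scoped ENNReal

noncomputable section

/-- Total pair energy `U(x₁,…,x_m) = Σ_{i<j} v(|x_i - x_j|)` of a finite configuration,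
with values in `ℝ ∪ {±∞}`. -/
def pairEnergy {d : ℕ} (v : ℝ → EReal) {m : ℕ}
    (f : Fin m → EuclideanSpace ℝ (Fin d)) : EReal :=
  ∑ p ∈ Finset.univ.filter (fun p : Fin m × Fin m => p.1 < p.2),
    v (dist (f p.1) (f p.2))

/-- Boltzmann weight `exp(-βE)` with the convention `exp(-∞) = 0` (for `E = +∞`). -/
def boltz (β : ℝ) (E : EReal) : ℝ≥0∞ :=
  if E = ⊤ then 0 else ENNReal.ofReal (Real.exp (-β * E.toReal))

/-- A finite set `S ⊆ ℝ^d` is `R`-connected if the graph on `S` with an edge between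
distinct points at distance `≤ R` is connected. -/
def RConn {d : ℕ} (R : ℝ) (S : Set (EuclideanSpace ℝ (Fin d))) : Prop :=
  ∀ a ∈ S, ∀ b ∈ S,
    Relation.ReflTransGen (fun p q => p ∈ S ∧ q ∈ S ∧ p ≠ q ∧ dist p q ≤ R) a b

/-- The cluster partition function `Z_k^cl(β)` for `k = j+1` particles:
`Z_k^cl(β) = (1/k!) ∫ exp(-βU(0,x₂,…,x_k)) 1({0,x₂,…,x_k} R-connected) dx₂⋯dx_k`. -/
def Zcl (d : ℕ) (v : ℝ → EReal) (β R : ℝ) (j : ℕ) : ℝ≥0∞ :=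
  ((j + 1).factorial : ℝ≥0∞)⁻¹ *
    ∫⁻ y : Fin j → EuclideanSpace ℝ (Fin d),
      Set.indicator
        {y : Fin j → EuclideanSpace ℝ (Fin d) |
          RConn R (Set.range (Fin.cons (0 : EuclideanSpace ℝ (Fin d)) y))}
        (fun y => boltz β (pairEnergy v (Fin.cons (0 : EuclideanSpace ℝ (Fin d)) y))) y

/-! ### Auxiliary lemmas -/

section Aux

variable {d : ℕ} {v : ℝ → EReal} {β R : ℝ}

lemma boltz_add {β : ℝ} {a b : EReal} (ha : a ≠ ⊥) (hb : b ≠ ⊥) :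
    boltz β (a + b) = boltz β a * boltz β b := by
  induction a using EReal.rec with
  | bot => exact absurd rfl ha
  | top => rw [EReal.top_add_of_ne_bot hb]; simp [boltz]
  | coe x =>
    induction b using EReal.rec with
    | bot => exact absurd rfl hb
    | top => rw [EReal.add_top_of_ne_bot ha]; simp [boltz]
    | coe y =>
      rw [← EReal.coe_add]
      simp only [boltz, if_neg (EReal.coe_ne_top _), EReal.toReal_coe]
      rw [show -β * (x + y) = -β * x + -β * y by ring, Real.exp_add,
        ENNReal.ofReal_mul (Real.exp_nonneg _)]

lemma sum_ne_bot {ι : Type*} (s : Finset ι) (g : ι → EReal) (hg : ∀ i, g i ≠ ⊥) :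
    ∑ i ∈ s, g i ≠ ⊥ := by
  classical
  induction s using Finset.induction with
  | empty => simp
  | insert _ _ h ih =>
    rw [Finset.sum_insert h]
    simp only [ne_eq, EReal.add_eq_bot_iff]
    exact fun hc => hc.elim (hg _) ih

lemma boltz_sum {ι : Type*} {β : ℝ} (s : Finset ι) (g : ι → EReal) (hg : ∀ i, g i ≠ ⊥) :
    boltz β (∑ i ∈ s, g i) = ∏ i ∈ s, boltz β (g i) := by
  classical
  induction s using Finset.induction with
  | empty => simp [boltz]
  | insert _ _ h ih =>
    rw [Finset.sum_insert h, Finset.prod_insert h,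
      boltz_add (hg _) (sum_ne_bot _ _ hg), ih]

lemma boltz_pairEnergy {m : ℕ} (hbot : ∀ r, v r ≠ ⊥)
    (f : Fin m → EuclideanSpace ℝ (Fin d)) :
    boltz β (pairEnergy v f)
      = ∏ p ∈ Finset.univ.filter (fun p : Fin m × Fin m => p.1 < p.2),
          boltz β (v (dist (f p.1) (f p.2))) :=
  boltz_sum _ _ (fun _ => hbot _)

lemma measurable_boltz {β : ℝ} : Measurable (boltz β) := by
  unfold boltz
  exact Measurable.ite (measurableSet_eq) measurable_const
    (ENNReal.measurable_ofReal.comp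
      (Real.continuous_exp.measurable.comp (measurable_ereal_toReal.const_mul (-β))))

lemma measurable_boltz_pairEnergy {m : ℕ} (hmeas : Measurable v) (hbot : ∀ r, v r ≠ ⊥) :
    Measurable fun x : Fin m → EuclideanSpace ℝ (Fin d) => boltz β (pairEnergy v x) := by
  have : (fun x : Fin m → EuclideanSpace ℝ (Fin d) => boltz β (pairEnergy v x))
      = fun x => ∏ p ∈ Finset.univ.filter (fun p : Fin m × Fin m => p.1 < p.2),
          boltz β (v (dist (x p.1) (x p.2))) := funext fun x => boltz_pairEnergy hbot x
  rw [this]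
  exact Finset.measurable_prod _ fun p _ =>
    measurable_boltz.comp (hmeas.comp ((measurable_pi_apply _).dist (measurable_pi_apply _)))

lemma pairEnergy_comp_perm {m : ℕ} (v : ℝ → EReal)
    (f : Fin m → EuclideanSpace ℝ (Fin d)) (σ : Equiv.Perm (Fin m)) :
    pairEnergy v (f ∘ σ) = pairEnergy v f := by
  classical
  unfold pairEnergy
  refine Finset.sum_nbij'
    (fun p => if σ p.1 < σ p.2 then (σ p.1, σ p.2) else (σ p.2, σ p.1))
    (fun q => if σ⁻¹ q.1 < σ⁻¹ q.2 then (σ⁻¹ q.1, σ⁻¹ q.2) else (σ⁻¹ q.2, σ⁻¹ q.1))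
    ?_ ?_ ?_ ?_ ?_
  · rintro ⟨p1, p2⟩ hp
    simp only [Finset.mem_filter, Finset.mem_univ, true_and] at hp ⊢
    by_cases h : σ p1 < σ p2
    · simpa [h] using h
    · have hne : σ p1 ≠ σ p2 := fun hc => absurd (σ.injective hc) hp.ne
      simpa [h] using lt_of_le_of_ne (not_lt.mp h) (Ne.symm hne)
  · rintro ⟨q1, q2⟩ hq
    simp only [Finset.mem_filter, Finset.mem_univ, true_and] at hq ⊢
    by_cases h : σ⁻¹ q1 < σ⁻¹ q2 <;> rw [Equiv.Perm.inv_def] at h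
    · simpa [h] using h
    · have hne : σ⁻¹ q1 ≠ σ⁻¹ q2 := fun hc => absurd ((σ⁻¹).injective hc) hq.ne
      simpa [h] using lt_of_le_of_ne (not_lt.mp h) (Ne.symm hne)
  · rintro ⟨p1, p2⟩ hp
    simp only [Finset.mem_filter, Finset.mem_univ, true_and] at hp
    by_cases h : σ p1 < σ p2
    · simp [h, hp]
    · simp [h, not_lt.mp h, hp, not_lt_of_gt hp]
  · rintro ⟨q1, q2⟩ hq
    simp only [Finset.mem_filter, Finset.mem_univ, true_and] at hq
    by_cases h : σ⁻¹ q1 < σ⁻¹ q2 <;> rw [Equiv.Perm.inv_def] at h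
    · simp [h, hq]
    · simp [h, not_lt.mp h, hq, not_lt_of_gt hq]
  · rintro ⟨p1, p2⟩ hp
    by_cases h : σ p1 < σ p2
    · simp [h]
    · simp [h, dist_comm]

lemma pairEnergy_translate {m : ℕ} (v : ℝ → EReal) (a : EuclideanSpace ℝ (Fin d))
    (f : Fin m → EuclideanSpace ℝ (Fin d)) :
    pairEnergy v (fun i => a + f i) = pairEnergy v f := by
  unfold pairEnergy
  simp [dist_add_left]

lemma RConn_translate {S : Set (EuclideanSpace ℝ (Fin d))} (a : EuclideanSpace ℝ (Fin d))
    (h : RConn R S) : RConn R ((fun p => a + p) '' S) := by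
  rintro _ ⟨p, hp, rfl⟩ _ ⟨q, hq, rfl⟩
  refine Relation.ReflTransGen.lift (fun p => a + p) ?_ _ _ (h p hp q hq)
  rintro x y ⟨hx, hy, hxy, hd⟩
  exact ⟨Set.mem_image_of_mem _ hx, Set.mem_image_of_mem _ hy,
    fun hc => hxy (by simpa using hc), by simpa [dist_add_left] using hd⟩

lemma RConn_range_translate {m : ℕ} (a : EuclideanSpace ℝ (Fin d))
    (f : Fin m → EuclideanSpace ℝ (Fin d)) :
    RConn R (Set.range fun i => a + f i) ↔ RConn R (Set.range f) := by
  constructor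
  · intro h
    have h2 := RConn_translate (-a) h
    have : ((fun p => -a + p) '' Set.range fun i => a + f i) = Set.range f := by
      rw [← Set.range_comp]
      simp [Function.comp_def]
    rwa [this] at h2
  · intro h
    have h2 := RConn_translate a h
    rwa [← Set.range_comp, Function.comp_def] at h2

lemma rConn_range_iff {ι : Type*} (hR : 0 ≤ R) (f : ι → EuclideanSpace ℝ (Fin d)) :
    RConn R (Set.range f) ↔
      ∀ p q : ι, Relation.ReflTransGen (fun p q => dist (f p) (f q) ≤ R) p q := by
  constructor
  · intro h p q
    have hc := h (f p) ⟨p, rfl⟩ (f q) ⟨q, rfl⟩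
    have key : ∀ b, Relation.ReflTransGen
        (fun p q => p ∈ Set.range f ∧ q ∈ Set.range f ∧ p ≠ q ∧ dist p q ≤ R) (f p) b →
        ∀ q', f q' = b → Relation.ReflTransGen (fun p q => dist (f p) (f q) ≤ R) p q' := by
      intro b hb
      induction hb with
      | refl =>
        intro q' hq'
        exact Relation.ReflTransGen.single (by rw [hq', dist_self]; exact hR)
      | tail hab hbc ih =>
        intro q' hq'
        obtain ⟨p'', hp''⟩ := hbc.1
        exact (ih p'' hp'').tail (by rw [hp'', hq']; exact hbc.2.2.2)
    exact key (f q) hc q rfl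
  · rintro h _ ⟨p, rfl⟩ _ ⟨q, rfl⟩
    have hc := h p q
    induction hc with
    | refl => exact Relation.ReflTransGen.refl
    | @tail b c hab hbc ih =>
      by_cases hbceq : f b = f c
      · rwa [← hbceq]
      · exact ih.tail ⟨⟨_, rfl⟩, ⟨_, rfl⟩, hbceq, hbc⟩

lemma measurableSet_chain {m : ℕ} (l : List (Fin m)) (p : Fin m) :
    MeasurableSet {x : Fin m → EuclideanSpace ℝ (Fin d) |
      List.Chain (fun a b => dist (x a) (x b) ≤ R) p l} := by
  induction l generalizing p with
  | nil =>
    have : {x : Fin m → EuclideanSpace ℝ (Fin d) |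
        List.Chain (fun a b => dist (x a) (x b) ≤ R) p []} = Set.univ := by
      ext x; simp [List.Chain]
    rw [this]; exact MeasurableSet.univ
  | cons b l ih =>
    have : {x : Fin m → EuclideanSpace ℝ (Fin d) |
        List.Chain (fun a b => dist (x a) (x b) ≤ R) p (b :: l)}
        = {x | dist (x p) (x b) ≤ R} ∩
          {x | List.Chain (fun a b' => dist (x a) (x b') ≤ R) b l} := by
      ext x; simp [List.Chain, List.chain_cons]
    rw [this]
    exact (measurableSet_le ((measurable_pi_apply p).dist (measurable_pi_apply b))
      measurable_const).inter (ih b)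

lemma measurableSet_rConn_range (hR : 0 ≤ R) {m : ℕ} :
    MeasurableSet {x : Fin m → EuclideanSpace ℝ (Fin d) | RConn R (Set.range x)} := by
  have hset : {x : Fin m → EuclideanSpace ℝ (Fin d) | RConn R (Set.range x)}
      = ⋂ (p : Fin m), ⋂ (q : Fin m), ⋃ (l : List (Fin m))
          (_ : (p :: l).getLast (List.cons_ne_nil _ _) = q),
          {x | List.Chain (fun a b => dist (x a) (x b) ≤ R) p l} := by
    ext x
    simp only [Set.mem_setOf_eq, Set.mem_iInter, Set.mem_iUnion, rConn_range_iff hR]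
    constructor
    · intro h p q
      obtain ⟨l, h1, h2⟩ := List.exists_isChain_cons_of_relationReflTransGen (h p q)
      exact ⟨l, h2, h1⟩
    · intro h p q
      obtain ⟨l, h2, h1⟩ := h p q
      exact List.relationReflTransGen_of_exists_isChain_cons l h1 h2
  rw [hset]
  exact MeasurableSet.iInter fun p => MeasurableSet.iInter fun q =>
    MeasurableSet.iUnion fun l => MeasurableSet.iUnion fun _ => measurableSet_chain l p

/-- The permutation carrying `Fin.cons` to `Fin.insertNth i`. -/
lemma cons_comp_perm {α : Type*} {m : ℕ} (i : Fin (m + 1)) (a : α) (y : Fin m → α) :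
    (Fin.cons a y : Fin (m + 1) → α) ∘ ((finSuccEquiv' i).trans (finSuccEquiv' 0).symm)
      = i.insertNth a y := by
  funext z
  refine Fin.succAboveCases i ?_ ?_ z
  · simp [finSuccEquiv'_at, finSuccEquiv'_symm_none]
  · intro j
    simp [finSuccEquiv'_symm_some, Fin.zero_succAbove]

lemma measurable_cons_map {m : ℕ} :
    Measurable fun y : Fin m → EuclideanSpace ℝ (Fin d) =>
      (Fin.cons (0 : EuclideanSpace ℝ (Fin d)) y : Fin (m + 1) → EuclideanSpace ℝ (Fin d)) := by
  rw [measurable_pi_iff]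
  intro k
  refine Fin.cases ?_ ?_ k
  · simpa using measurable_const
  · intro j; simpa using measurable_pi_apply j

end Aux

/-- Reducible shorthand used in the main proof. -/
abbrev Euc (d : ℕ) := EuclideanSpace ℝ (Fin d)

/-- Mürmann's symmetry-and-translation bound: the (1/k!)-normalized integral over all
`k`-point configurations that are `R`-connected and have at least one point in `Λ` is
bounded by `k |Λ| Z_k^cl(β)`, for `k = j+1 ≥ 1`. -/
theorem connected_cluster_integral_le (d : ℕ) (hd : 1 ≤ d)
    (v : ℝ → EReal) (hmeas : Measurable v) (hbot : ∀ r, v r ≠ ⊥)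
    (β R : ℝ) (hβ : 0 < β) (hR : 0 < R) (j : ℕ)
    (Λ : Set (EuclideanSpace ℝ (Fin d))) (hΛ : MeasurableSet Λ)
    (hΛfin : volume Λ < ⊤) :
    ((j + 1).factorial : ℝ≥0∞)⁻¹ *
      (∫⁻ x : Fin (j + 1) → EuclideanSpace ℝ (Fin d),
        Set.indicator
          {x : Fin (j + 1) → EuclideanSpace ℝ (Fin d) |
            RConn R (Set.range x) ∧ ∃ i, x i ∈ Λ}
          (fun x => boltz β (pairEnergy v x)) x)
      ≤ ((j : ℝ≥0∞) + 1) * volume Λ * Zcl d v β R j := by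
  classical
  set W : (Fin (j + 1) → Euc d) → ℝ≥0∞ := fun x => boltz β (pairEnergy v x) with hWdef
  have hWmeas : Measurable W := measurable_boltz_pairEnergy hmeas hbot
  have hRmeas : MeasurableSet {x : Fin (j + 1) → Euc d | RConn R (Set.range x)} :=
    measurableSet_rConn_range hR.le
  set I : ℝ≥0∞ := ∫⁻ y : Fin j → Euc d,
      Set.indicator {y : Fin j → Euc d | RConn R (Set.range (Fin.cons (0 : Euc d) y))}
        (fun y => boltz β (pairEnergy v (Fin.cons (0 : Euc d) y))) y with hIdef
  -- the per-index sets
  have hSmeas : ∀ i : Fin (j + 1),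
      MeasurableSet {x : Fin (j + 1) → Euc d | RConn R (Set.range x) ∧ x i ∈ Λ} := by
    intro i
    exact hRmeas.inter ((measurable_pi_apply i) hΛ)
  -- Step B: each per-index integral equals `volume Λ * I`
  have key : ∀ i : Fin (j + 1),
      (∫⁻ x : Fin (j + 1) → Euc d,
        Set.indicator {x : Fin (j + 1) → Euc d | RConn R (Set.range x) ∧ x i ∈ Λ} W x)
        = volume Λ * I := by
    intro i
    set G : (Fin (j + 1) → Euc d) → ℝ≥0∞ :=
      Set.indicator {x : Fin (j + 1) → Euc d | RConn R (Set.range x) ∧ x i ∈ Λ} W with hGdef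
    have hGmeas : Measurable G := hWmeas.indicator (hSmeas i)
    set e := MeasurableEquiv.piFinSuccAbove (fun _ : Fin (j + 1) => Euc d) i with hedef
    have hmp : MeasurePreserving (⇑e.symm)
        ((volume : Measure (Euc d)).prod (volume : Measure (Fin j → Euc d)))
        (volume : Measure (Fin (j + 1) → Euc d)) := by
      have h1 := (measurePreserving_piFinSuccAbove
        (fun _ : Fin (j + 1) => (volume : Measure (Euc d))) i).symm e
      simpa [← volume_pi] using h1
    have hesymm : ∀ a : Euc d, ∀ y : Fin j → Euc d, e.symm (a, y) = i.insertNth a y := by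
      intro a y
      simp only [hedef, MeasurableEquiv.piFinSuccAbove_symm_apply]
      rfl
    have step1 : (∫⁻ x : Fin (j + 1) → Euc d, G x)
        = ∫⁻ a : Euc d, ∫⁻ y : Fin j → Euc d, G (i.insertNth a y) := by
      have hGa : AEMeasurable (fun z : Euc d × (Fin j → Euc d) => G (e.symm z))
          ((volume : Measure (Euc d)).prod (volume : Measure (Fin j → Euc d))) :=
        (hGmeas.comp e.symm.measurable).aemeasurable
      rw [← hmp.lintegral_comp_emb e.symm.measurableEmbedding G,
        lintegral_prod _ hGa]
      simp_rw [hesymm]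
    -- translation invariance for the inner integral
    have step2 : ∀ a : Euc d,
        (∫⁻ y : Fin j → Euc d, G (i.insertNth a y))
          = ∫⁻ y : Fin j → Euc d, G (i.insertNth a (fun m => a + y m)) := by
      intro a
      rw [← lintegral_add_left_eq_self (fun y : Fin j → Euc d => G (i.insertNth a y))
        (fun _ => a)]
      rfl
    -- the pointwise identification
    have hperm : ∀ y : Fin j → Euc d,
        i.insertNth (0 : Euc d) y = (Fin.cons (0 : Euc d) y : Fin (j + 1) → Euc d) ∘
          ((finSuccEquiv' i).trans (finSuccEquiv' 0).symm) :=
      fun y => (cons_comp_perm i 0 y).symm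
    have hshift : ∀ (a : Euc d) (y : Fin j → Euc d),
        i.insertNth a (fun m => a + y m) = fun z => a + (i.insertNth (0 : Euc d) y : Fin (j + 1) → Euc d) z := by
      intro a y
      funext z
      refine Fin.succAboveCases i ?_ ?_ z
      · simp
      · intro m; simp
    have step3 : ∀ (a : Euc d) (y : Fin j → Euc d),
        G (i.insertNth a (fun m => a + y m))
          = Set.indicator Λ
              (fun _ => Set.indicator
                {y : Fin j → Euc d | RConn R (Set.range (Fin.cons (0 : Euc d) y))}
                (fun y => boltz β (pairEnergy v (Fin.cons (0 : Euc d) y))) y) a := by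
      intro a y
      set u : Fin (j + 1) → Euc d := i.insertNth (0 : Euc d) y with hudef
      have hGx : i.insertNth a (fun m => a + y m) = fun z => a + u z := hshift a y
      set σ : Equiv.Perm (Fin (j + 1)) := (finSuccEquiv' i).trans (finSuccEquiv' 0).symm
        with hσdef
      have huc : u = (Fin.cons (0 : Euc d) y : Fin (j + 1) → Euc d) ∘ σ := hperm y
      have hrange : RConn R (Set.range fun z => a + u z) ↔
          RConn R (Set.range (Fin.cons (0 : Euc d) y : Fin (j + 1) → Euc d)) := by
        rw [RConn_range_translate, huc, σ.surjective.range_comp]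
      have hmemΛ : (fun z => a + u z) i = a := by
        simp [hudef, Fin.insertNth_apply_same]
      have hW : W (fun z => a + u z)
          = boltz β (pairEnergy v (Fin.cons (0 : Euc d) y : Fin (j + 1) → Euc d)) := by
        simp only [hWdef]
        rw [pairEnergy_translate, huc, pairEnergy_comp_perm]
      rw [hGx, hGdef]
      by_cases ha : a ∈ Λ
      · by_cases hconn : RConn R (Set.range (Fin.cons (0 : Euc d) y : Fin (j + 1) → Euc d))
        · have hmem : (fun z => a + u z) ∈
              {x : Fin (j + 1) → Euc d | RConn R (Set.range x) ∧ x i ∈ Λ} :=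
            ⟨hrange.mpr hconn, by rw [hmemΛ]; exact ha⟩
          have hmem2 : y ∈ {y : Fin j → Euc d |
              RConn R (Set.range (Fin.cons (0 : Euc d) y : Fin (j + 1) → Euc d))} := hconn
          rw [Set.indicator_of_mem hmem W, Set.indicator_of_mem ha,
            Set.indicator_of_mem hmem2]
          exact hW
        · have hmem : (fun z => a + u z) ∉
              {x : Fin (j + 1) → Euc d | RConn R (Set.range x) ∧ x i ∈ Λ} :=
            fun hc => hconn (hrange.mp hc.1)
          have hmem2 : y ∉ {y : Fin j → Euc d |
              RConn R (Set.range (Fin.cons (0 : Euc d) y : Fin (j + 1) → Euc d))} := hconn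
          rw [Set.indicator_of_notMem hmem W, Set.indicator_of_mem ha,
            Set.indicator_of_notMem hmem2]
      · have hmem : (fun z => a + u z) ∉
            {x : Fin (j + 1) → Euc d | RConn R (Set.range x) ∧ x i ∈ Λ} := by
          intro hc
          exact ha (by rw [← hmemΛ]; exact hc.2)
        rw [Set.indicator_of_notMem hmem W, Set.indicator_of_notMem ha]
    calc (∫⁻ x : Fin (j + 1) → Euc d, G x)
        = ∫⁻ a : Euc d, ∫⁻ y : Fin j → Euc d, G (i.insertNth a (fun m => a + y m)) := by
          rw [step1]; exact lintegral_congr fun a => step2 a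
      _ = ∫⁻ a : Euc d, Set.indicator Λ (fun _ => I) a := by
          refine lintegral_congr fun a => ?_
          rw [lintegral_congr fun y => step3 a y]
          by_cases ha : a ∈ Λ
          · simp only [Set.indicator_of_mem ha]; rfl
          · simp only [Set.indicator_of_notMem ha, lintegral_zero]
      _ = I * volume Λ := lintegral_indicator_const hΛ I
      _ = volume Λ * I := mul_comm _ _
  -- Step A: union bound
  have hsum : (∫⁻ x : Fin (j + 1) → Euc d,
      Set.indicator {x : Fin (j + 1) → Euc d | RConn R (Set.range x) ∧ ∃ i, x i ∈ Λ} W x)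
      ≤ ∑ i : Fin (j + 1), ∫⁻ x : Fin (j + 1) → Euc d,
          Set.indicator {x : Fin (j + 1) → Euc d | RConn R (Set.range x) ∧ x i ∈ Λ} W x := by
    rw [← lintegral_finset_sum _ (fun i _ => hWmeas.indicator (hSmeas i))]
    refine lintegral_mono fun x => ?_
    by_cases hx : x ∈ {x : Fin (j + 1) → Euc d | RConn R (Set.range x) ∧ ∃ i, x i ∈ Λ}
    · rw [Set.indicator_of_mem hx]
      obtain ⟨h1, i0, h2⟩ := hx
      have hx0 : W x = Set.indicator
          {x : Fin (j + 1) → Euc d | RConn R (Set.range x) ∧ x i0 ∈ Λ} W x :=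
        (Set.indicator_of_mem (show x ∈ {x : Fin (j + 1) → Euc d | RConn R (Set.range x) ∧ x i0 ∈ Λ} from ⟨h1, h2⟩) W).symm
      rw [hx0]
      exact Finset.single_le_sum
        (f := fun i => Set.indicator
          {x' : Fin (j + 1) → Euc d | RConn R (Set.range x') ∧ x' i ∈ Λ} W x)
        (fun _ _ => zero_le) (Finset.mem_univ i0)
    · rw [Set.indicator_of_notMem hx]; exact zero_le
  -- Conclusion
  have hle : ((j + 1).factorial : ℝ≥0∞)⁻¹ *
      (∫⁻ x : Fin (j + 1) → Euc d,
        Set.indicator {x : Fin (j + 1) → Euc d | RConn R (Set.range x) ∧ ∃ i, x i ∈ Λ} W x)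
      ≤ ((j + 1).factorial : ℝ≥0∞)⁻¹ *
        ∑ i : Fin (j + 1), (volume Λ * I) := by
    refine mul_le_mul_right (le_trans hsum (le_of_eq ?_)) _
    exact Finset.sum_congr rfl fun i _ => key i
  refine le_trans hle (le_of_eq ?_)
  rw [Finset.sum_const, Finset.card_univ, Fintype.card_fin, nsmul_eq_mul]
  show ((j + 1).factorial : ℝ≥0∞)⁻¹ * (((j + 1 : ℕ) : ℝ≥0∞) * (volume Λ * I))
    = ((j : ℝ≥0∞) + 1) * volume Λ * Zcl d v β R j
  rw [Zcl]
  push_cast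
  ring

end
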